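/- The asymptotic π(x) ~ x/ln x holds if and only if ψ(x) ~ x, where ψ(x) = ∑_{n ≤ x} Λ(n) is the Chebyshev function. -/

import Mathlib

open ArithmeticFunction Filter Finset Real in
noncomputable def psiR (x : ℝ) : ℝ := ∑ n ∈ Finset.Icc 1 ⌊x⌋₊, Λ n

open ArithmeticFunction Filter Finset Real in
noncomputable def thetaR (x : ℝ) : ℝ := ∑ n ∈ (Finset.Icc 1 ⌊x⌋₊).filter Nat.Prime, Λ n

open ArithmeticFunction Filter Finset Real

lemma theta_le_psi (x : ℝ) : thetaR x ≤ psiR x := by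
  apply Finset.sum_le_sum_of_subset_of_nonneg (Finset.filter_subset _ _)
  intro i _ _; exact vonMangoldt_nonneg

lemma primeCounting_eq (N : ℕ) :
    (Nat.primeCounting N : ℝ) = ((Finset.Icc 1 N).filter Nat.Prime).card := by
  rw [Nat.primeCounting, Nat.primeCounting', Nat.count_eq_card_filter_range]
  congr 2
  ext p
  simp only [Finset.mem_filter, Finset.mem_range, Finset.mem_Icc, Nat.lt_succ_iff]
  exact ⟨fun h => ⟨⟨h.2.one_lt.le, h.1⟩, h.2⟩, fun h => ⟨h.1.2, h.2⟩⟩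

lemma theta_le_pi_log (x : ℝ) (hx : 1 ≤ x) :
    thetaR x ≤ (Nat.primeCounting ⌊x⌋₊ : ℝ) * Real.log x := by
  rw [primeCounting_eq]
  calc thetaR x ≤ (((Finset.Icc 1 ⌊x⌋₊).filter Nat.Prime).card : ℕ) • Real.log x := by
        apply Finset.sum_le_card_nsmul
        intro n hn
        simp only [Finset.mem_filter, Finset.mem_Icc] at hn
        have h1 : (1:ℝ) ≤ n := by exact_mod_cast hn.1.1
        have h2 : (n:ℝ) ≤ x :=
          le_trans (by exact_mod_cast hn.1.2) (Nat.floor_le (by linarith))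
        calc Λ n ≤ Real.log n := vonMangoldt_le_log
          _ ≤ Real.log x := Real.log_le_log (by linarith) h2
    _ = _ := by rw [nsmul_eq_mul]

lemma psi_sub_theta_le (x : ℝ) (hx : 2 ≤ x) :
    psiR x - thetaR x ≤ 2 * Real.sqrt x * Real.log x ^ 2 := by
  have hx0 : (0:ℝ) < x := by linarith
  have hx1 : (1:ℝ) ≤ x := by linarith
  set N := ⌊x⌋₊ with hN
  set T := (Finset.Icc 1 N).filter (fun n => ¬ n.Prime ∧ IsPrimePow n) with hT
  have hsub : T ⊆ (Finset.Icc 1 N).filter (fun n => ¬ n.Prime) := by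
    intro n hn
    simp only [hT, Finset.mem_filter] at hn ⊢
    exact ⟨hn.1, hn.2.1⟩
  have hsum : psiR x - thetaR x = ∑ n ∈ T, Λ n := by
    rw [psiR, thetaR,
      ← Finset.sum_filter_add_sum_filter_not (Finset.Icc 1 N) Nat.Prime (fun n => Λ n)]
    have : ∑ n ∈ (Finset.Icc 1 N).filter (fun n => ¬ n.Prime), Λ n = ∑ n ∈ T, Λ n := by
      refine (Finset.sum_subset hsub ?_).symm
      intro n hn hn'
      simp only [hT, Finset.mem_filter] at hn hn'
      have : ¬ IsPrimePow n := fun h => hn' ⟨hn.1, hn.2, h⟩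
      rw [vonMangoldt_apply, if_neg this]
    rw [← this]; ring
  set M := ⌊Real.sqrt x⌋₊ with hM
  set K := ⌊Real.logb 2 x⌋₊ with hK
  have hxN : (N : ℝ) ≤ x := Nat.floor_le hx0.le
  have hcard : T.card ≤ (Finset.Icc 2 M ×ˢ Finset.Icc 2 K).card := by
    apply Finset.card_le_card_of_injOn (fun n => (n.minFac, n.factorization n.minFac))
    · intro n hn
      simp only [Finset.mem_coe, hT, Finset.mem_filter, Finset.mem_Icc] at hn
      obtain ⟨⟨hn1, hnN⟩, hnp, hpp⟩ := hn
      obtain ⟨p, k, hp, hk, rfl⟩ := (isPrimePow_nat_iff _).1 hpp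
      have hmf : (p^k).minFac = p := hp.pow_minFac hk.ne'
      have hfac : (p^k).factorization p = k := by
        rw [hp.factorization_pow, Finsupp.single_eq_same]
      have hk2 : 2 ≤ k := by
        rcases Nat.lt_or_ge k 2 with h | h
        · interval_cases k
          · simp at hnp; exact absurd hp hnp
        · exact h
      have hxk : ((p:ℝ))^k ≤ x := by
        calc ((p:ℝ))^k = ((p^k : ℕ) : ℝ) := by push_cast; ring
          _ ≤ (N:ℝ) := by exact_mod_cast hnN
          _ ≤ x := hxN
      have hp1 : (1:ℝ) ≤ (p:ℝ) := by exact_mod_cast hp.one_lt.le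
      have hpM : p ≤ M := by
        apply Nat.le_floor
        have h2k : ((p:ℝ))^2 ≤ (p:ℝ)^k := pow_le_pow_right₀ hp1 hk2
        calc (p:ℝ) = Real.sqrt ((p:ℝ)^2) := (Real.sqrt_sq (by positivity)).symm
          _ ≤ Real.sqrt x := Real.sqrt_le_sqrt (le_trans h2k hxk)
      have hkK : k ≤ K := by
        apply Nat.le_floor
        rw [Real.le_logb_iff_rpow_le one_lt_two hx0, Real.rpow_natCast]
        calc (2:ℝ)^k ≤ (p:ℝ)^k := by
              apply pow_le_pow_left₀ (by norm_num)
              exact_mod_cast hp.two_le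
          _ ≤ x := hxk
      simp only [Finset.mem_coe, Finset.mem_product, Finset.mem_Icc, hmf, hfac]
      exact ⟨⟨hp.two_le, hpM⟩, hk2, hkK⟩
    · have key : ∀ n ∈ T, n.minFac ^ (n.factorization n.minFac) = n := by
        intro n hn
        simp only [hT, Finset.mem_filter] at hn
        obtain ⟨p, k, hp, hk, rfl⟩ := (isPrimePow_nat_iff _).1 hn.2.2
        rw [hp.pow_minFac hk.ne', hp.factorization_pow, Finsupp.single_eq_same]
      intro a ha b hb hab
      have h1 := key a ha
      have h2 := key b hb
      simp only [Prod.mk.injEq] at hab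
      rw [← h1, ← h2, hab.2, hab.1]
  have hcard2 : (T.card : ℝ) ≤ Real.sqrt x * (2 * Real.log x) := by
    have hMK : T.card ≤ M * K := by
      refine hcard.trans ?_
      rw [Finset.card_product, Nat.card_Icc, Nat.card_Icc]
      exact Nat.mul_le_mul (by omega) (by omega)
    have h1 : (M:ℝ) ≤ Real.sqrt x := Nat.floor_le (Real.sqrt_nonneg x)
    have hlogb1 : (1:ℝ) ≤ Real.logb 2 x := by
      rw [Real.le_logb_iff_rpow_le one_lt_two hx0, Real.rpow_one]
      exact hx
    have h2 : (K:ℝ) ≤ Real.logb 2 x := Nat.floor_le (by linarith)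
    have h3 : Real.logb 2 x ≤ 2 * Real.log x := by
      rw [Real.logb, div_le_iff₀ (Real.log_pos one_lt_two)]
      have hl2 := Real.log_two_gt_d9
      have hlx : 0 ≤ Real.log x := Real.log_nonneg hx1
      nlinarith
    calc (T.card : ℝ) ≤ (M:ℝ) * (K:ℝ) := by exact_mod_cast hMK
      _ ≤ Real.sqrt x * (2 * Real.log x) := by
          apply mul_le_mul h1 (h2.trans h3) (by positivity) (Real.sqrt_nonneg x)
  rw [hsum]
  have hterm : ∀ n ∈ T, Λ n ≤ Real.log x := by
    intro n hn
    simp only [hT, Finset.mem_filter, Finset.mem_Icc] at hn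
    have h1 : (1:ℝ) ≤ n := by exact_mod_cast hn.1.1
    have h2 : (n:ℝ) ≤ x := le_trans (by exact_mod_cast hn.1.2) hxN
    exact vonMangoldt_le_log.trans (Real.log_le_log (by linarith) h2)
  have hlx : 0 ≤ Real.log x := Real.log_nonneg hx1
  calc ∑ n ∈ T, Λ n ≤ T.card • Real.log x := Finset.sum_le_card_nsmul _ _ _ hterm
    _ = (T.card : ℝ) * Real.log x := by rw [nsmul_eq_mul]
    _ ≤ Real.sqrt x * (2 * Real.log x) * Real.log x := by
        apply mul_le_mul_of_nonneg_right hcard2 hlx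
    _ = 2 * Real.sqrt x * Real.log x ^ 2 := by ring

lemma pi_le_aux (ε x : ℝ) (hε : 0 < ε) (hε1 : ε < 1) (hx : 2 ≤ x) :
    (Nat.primeCounting ⌊x⌋₊ : ℝ) * (ε * Real.log x) ≤
      thetaR x + x ^ ε * (ε * Real.log x) := by
  have hx0 : (0:ℝ) < x := by linarith
  have hx1 : (1:ℝ) ≤ x := by linarith
  have hlx : 0 ≤ Real.log x := Real.log_nonneg hx1
  set y := x ^ ε with hy
  have hy0 : 0 < y := Real.rpow_pos_of_pos hx0 ε
  set P := (Finset.Icc 1 ⌊x⌋₊).filter Nat.Prime with hP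
  set Q := P.filter (fun p => ⌊y⌋₊ < p) with hQ
  have hlogy : Real.log y = ε * Real.log x := Real.log_rpow hx0 ε
  have hsumQ : (Q.card : ℝ) * (ε * Real.log x) ≤ thetaR x := by
    have h1 : Q.card • (ε * Real.log x) ≤ ∑ p ∈ Q, Λ p := by
      apply Finset.card_nsmul_le_sum
      intro p hp
      simp only [hQ, hP, Finset.mem_filter, Finset.mem_Icc] at hp
      have hprime := hp.1.2
      have hpy : y ≤ (p:ℝ) := by
        have : ⌊y⌋₊ + 1 ≤ p := hp.2
        calc y ≤ (⌊y⌋₊ : ℝ) + 1 := (Nat.lt_floor_add_one y).le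
          _ ≤ (p:ℝ) := by exact_mod_cast this
      rw [vonMangoldt_apply_prime hprime, ← hlogy]
      exact Real.log_le_log hy0 hpy
    have h2 : ∑ p ∈ Q, Λ p ≤ thetaR x := by
      apply Finset.sum_le_sum_of_subset_of_nonneg (Finset.filter_subset _ _)
      intro i _ _; exact vonMangoldt_nonneg
    calc (Q.card : ℝ) * (ε * Real.log x) = Q.card • (ε * Real.log x) := by
          rw [nsmul_eq_mul]
      _ ≤ ∑ p ∈ Q, Λ p := h1
      _ ≤ thetaR x := h2
  have hPQ : (P.card : ℝ) ≤ (Q.card : ℝ) + y := by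
    have hsplit : Q.card + (P.filter (fun p => ¬ ⌊y⌋₊ < p)).card = P.card := by
      rw [hQ]; exact Finset.card_filter_add_card_filter_not _
    have hsmall : (P.filter (fun p => ¬ ⌊y⌋₊ < p)).card ≤ ⌊y⌋₊ := by
      have : P.filter (fun p => ¬ ⌊y⌋₊ < p) ⊆ Finset.Icc 1 ⌊y⌋₊ := by
        intro p hp
        simp only [hP, Finset.mem_filter, Finset.mem_Icc, not_lt] at hp
        exact Finset.mem_Icc.2 ⟨hp.1.1.1, hp.2⟩
      calc _ ≤ (Finset.Icc 1 ⌊y⌋₊).card := Finset.card_le_card this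
        _ = ⌊y⌋₊ := by rw [Nat.card_Icc]; omega
    have hfy : (⌊y⌋₊ : ℝ) ≤ y := Nat.floor_le hy0.le
    have : (P.card : ℝ) ≤ (Q.card : ℝ) + (⌊y⌋₊ : ℝ) := by
      rw [← hsplit]; push_cast
      have : ((P.filter (fun p => ¬ ⌊y⌋₊ < p)).card : ℝ) ≤ (⌊y⌋₊ : ℝ) := by
        exact_mod_cast hsmall
      linarith
    linarith
  have hεl : 0 ≤ ε * Real.log x := by positivity
  calc (Nat.primeCounting ⌊x⌋₊ : ℝ) * (ε * Real.log x)
      = (P.card : ℝ) * (ε * Real.log x) := by rw [primeCounting_eq]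
    _ ≤ ((Q.card : ℝ) + y) * (ε * Real.log x) := mul_le_mul_of_nonneg_right hPQ hεl
    _ = (Q.card : ℝ) * (ε * Real.log x) + y * (ε * Real.log x) := by ring
    _ ≤ thetaR x + x ^ ε * (ε * Real.log x) := by rw [hy]; linarith

lemma lim_sqrt_log : Tendsto (fun x : ℝ => 2 * Real.sqrt x * Real.log x ^ 2 / x)
    atTop (nhds 0) := by
  have h : (fun x : ℝ => Real.log x ^ (2:ℕ)) =o[atTop] fun x : ℝ => x ^ ((1:ℝ)/2) := by
    simpa [Real.rpow_natCast] using
      isLittleO_log_rpow_rpow_atTop ((2:ℕ):ℝ) (by norm_num : (0:ℝ) < 1/2)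
  have h1 : Tendsto (fun x : ℝ => Real.log x ^ (2:ℕ) / x ^ ((1:ℝ)/2)) atTop (nhds 0) :=
    h.tendsto_div_nhds_zero
  have h2 : Tendsto (fun x : ℝ => 2 * (Real.log x ^ (2:ℕ) / x ^ ((1:ℝ)/2)))
      atTop (nhds 0) := by
    simpa using h1.const_mul 2
  apply h2.congr'
  filter_upwards [eventually_gt_atTop (0:ℝ)] with x hx
  have hs : (0:ℝ) < Real.sqrt x := Real.sqrt_pos.2 hx
  have hxs : Real.sqrt x * Real.sqrt x = x := Real.mul_self_sqrt hx.le
  rw [← Real.sqrt_eq_rpow]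
  field_simp
  nlinarith [hxs, sq_nonneg (Real.log x)]

lemma lim_rpow_log (ε : ℝ) (hε1 : ε < 1) :
    Tendsto (fun x : ℝ => x ^ ε * Real.log x / x) atTop (nhds 0) := by
  have h : Real.log =o[atTop] fun x : ℝ => x ^ (1 - ε) :=
    isLittleO_log_rpow_atTop (by linarith)
  have h1 : Tendsto (fun x : ℝ => Real.log x / x ^ (1-ε)) atTop (nhds 0) :=
    h.tendsto_div_nhds_zero
  apply h1.congr'
  filter_upwards [eventually_gt_atTop (0:ℝ)] with x hx
  rw [Real.rpow_sub hx, Real.rpow_one]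
  rw [div_div_eq_mul_div, div_eq_div_iff (by positivity) (by positivity)]
  ring

open ArithmeticFunction Filter in
theorem pnt_iff_chebyshev_psi :
    Tendsto (fun x : ℝ => (Nat.primeCounting ⌊x⌋₊ : ℝ) / (x / Real.log x)) atTop (nhds 1)
      ↔ Tendsto (fun x : ℝ => (∑ n ∈ Finset.Icc 1 ⌊x⌋₊, Λ n) / x) atTop (nhds 1) := by
  have hALHS : (fun x : ℝ => (Nat.primeCounting ⌊x⌋₊ : ℝ) / (x / Real.log x))
      = fun x : ℝ => (Nat.primeCounting ⌊x⌋₊ : ℝ) * Real.log x / x := by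
    funext x; rw [div_div_eq_mul_div]
  have hRHS : (fun x : ℝ => (∑ n ∈ Finset.Icc 1 ⌊x⌋₊, Λ n) / x)
      = fun x : ℝ => psiR x / x := rfl
  rw [hALHS, hRHS]
  set A := fun x : ℝ => (Nat.primeCounting ⌊x⌋₊ : ℝ) * Real.log x / x with hA
  set fθ := fun x : ℝ => thetaR x / x with hfθ
  set fψ := fun x : ℝ => psiR x / x with hfψ
  -- the difference fψ - fθ tends to 0
  have hdiff : Tendsto (fun x => fψ x - fθ x) atTop (nhds 0) := by
    apply tendsto_of_tendsto_of_tendsto_of_le_of_le' tendsto_const_nhds lim_sqrt_log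
    · filter_upwards [eventually_ge_atTop (2:ℝ)] with x hx
      have hx0 : (0:ℝ) < x := by linarith
      have h := theta_le_psi x
      simp only [hfψ, hfθ, ← sub_div]
      exact div_nonneg (by linarith) hx0.le
    · filter_upwards [eventually_ge_atTop (2:ℝ)] with x hx
      have hx0 : (0:ℝ) < x := by linarith
      simp only [hfψ, hfθ, ← sub_div]
      exact (div_le_div_iff_of_pos_right hx0).mpr (psi_sub_theta_le x hx)
  -- fθ → 1 ↔ fψ → 1
  have hθψ : Tendsto fθ atTop (nhds 1) ↔ Tendsto fψ atTop (nhds 1) := by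
    constructor
    · intro h
      have := h.add hdiff
      simpa using this.congr (fun x => by ring)
    · intro h
      have := h.sub hdiff
      simpa using this.congr (fun x => by ring)
  -- fθ ≤ A eventually
  have hθA : ∀ᶠ x in atTop, fθ x ≤ A x := by
    filter_upwards [eventually_ge_atTop (2:ℝ)] with x hx
    have hx0 : (0:ℝ) < x := by linarith
    exact (div_le_div_iff_of_pos_right hx0).mpr (theta_le_pi_log x (by linarith))
  -- key3 eventually, in divided form
  have hkey3 : ∀ ε : ℝ, 0 < ε → ε < 1 → ∀ᶠ x in atTop,
      ε * A x ≤ fθ x + ε * (x ^ ε * Real.log x / x) := by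
    intro ε hε hε1
    filter_upwards [eventually_ge_atTop (2:ℝ)] with x hx
    have hx0 : (0:ℝ) < x := by linarith
    have h := pi_le_aux ε x hε hε1 hx
    have h2 := (div_le_div_iff_of_pos_right hx0).mpr h
    calc ε * A x = (Nat.primeCounting ⌊x⌋₊ : ℝ) * (ε * Real.log x) / x := by
          simp only [hA]; ring
      _ ≤ (thetaR x + x ^ ε * (ε * Real.log x)) / x := h2
      _ = fθ x + ε * (x ^ ε * Real.log x / x) := by
          simp only [hfθ]; ring
  constructor
  · -- A → 1 implies fψ → 1
    intro hAt
    rw [← hθψ]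
    rw [tendsto_order]
    constructor
    · intro a ha
      set ε := (1 + max a 0) / 2 with hε
      have hε0 : 0 < ε := by
        have : (0:ℝ) ≤ max a 0 := le_max_right a 0
        rw [hε]; linarith
      have hε1 : ε < 1 := by
        have : max a 0 < 1 := by
          rcases max_cases a 0 with ⟨h1, _⟩ | ⟨h1, _⟩ <;> rw [h1] <;> linarith
        rw [hε]; linarith
      have haε : a < ε := by
        have : a ≤ max a 0 := le_max_left a 0
        have : max a 0 < ε := by
          have h1 : max a 0 < 1 := by
            rcases max_cases a 0 with ⟨h1, _⟩ | ⟨h1, _⟩ <;> rw [h1] <;> linarith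
          rw [hε]; linarith
        linarith
      have hg : Tendsto (fun x => ε * A x - ε * (x ^ ε * Real.log x / x))
          atTop (nhds ε) := by
        have := (hAt.const_mul ε).sub ((lim_rpow_log ε hε1).const_mul ε)
        simpa using this
      have hev : ∀ᶠ x in atTop, a < ε * A x - ε * (x ^ ε * Real.log x / x) :=
        hg.eventually (eventually_gt_nhds haε)
      filter_upwards [hev, hkey3 ε hε0 hε1] with x h1 h2
      linarith
    · intro b hb
      filter_upwards [hθA, hAt.eventually (eventually_lt_nhds hb)] with x h1 h2
      linarith
  · -- fψ → 1 implies A → 1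
    intro hψt
    have hθt : Tendsto fθ atTop (nhds 1) := hθψ.2 hψt
    rw [tendsto_order]
    constructor
    · intro a ha
      filter_upwards [hθA, hθt.eventually (eventually_gt_nhds ha)] with x h1 h2
      linarith
    · intro b hb
      set ε := 2 / (b + 1) with hε
      have hb1 : (0:ℝ) < b + 1 := by linarith
      have hε0 : 0 < ε := by positivity
      have hε1 : ε < 1 := by
        rw [hε, div_lt_one hb1]; linarith
      have hεb : 1 < ε * b := by
        rw [hε, div_mul_eq_mul_div, lt_div_iff₀ hb1]; nlinarith
      have hg : Tendsto (fun x => fθ x + ε * (x ^ ε * Real.log x / x))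
          atTop (nhds 1) := by
        have := hθt.add ((lim_rpow_log ε hε1).const_mul ε)
        simpa using this
      have hev : ∀ᶠ x in atTop, fθ x + ε * (x ^ ε * Real.log x / x) < ε * b :=
        hg.eventually (eventually_lt_nhds hεb)
      filter_upwards [hev, hkey3 ε hε0 hε1] with x h1 h2
      have : ε * A x < ε * b := by linarith
      exact lt_of_mul_lt_mul_left this hε0.le
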